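/- arXiv:1306.0414 — 4 statements merged into one kernel-verified Lean document; each statement's English description precedes it below -/
import Mathlib

section
/- Let d ≥ 2, let (e_j)_{j=1}^d be the standard orthonormal basis of ℂ^d, and let ψ_k = (1/√(d−1)) Σ_{j≠k} e_j for k ∈ {1,…,d}. Let Λ be a finite set, and for each k let p_k : Λ → ℝ be nonnegative with Σ_{λ∈Λ} p_k(λ) = 1, and for each j ∈ {1,…,d} let ξ_j : Λ → ℝ be nonnegative with Σ_{j=1}^d ξ_j(λ) = 1 for every λ. If the model reproduces the Born-rule statistics of the basis measurement on these states, i.e. Σ_{λ∈Λ} ξ_j(λ)·p_k(λ) = |⟨e_j, ψ_k⟩|² for all j, k ∈ {1,…,d}, then Σ_{λ∈Λ} min_k p_k(λ) = 0; in particular, there is no λ ∈ Λ with p_k(λ) > 0 for all k. -/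
open scoped ComplexInnerProductSpace

/-- The standard basis vector `e j` of `ℂ^d`. -/
noncomputable def stdVec (d : ℕ) (j : Fin d) : EuclideanSpace ℂ (Fin d) :=
  EuclideanSpace.single j 1

/-- The state `ψ_k = (1/√(d-1)) Σ_{j ≠ k} e_j`. -/
noncomputable def psiMiss (d : ℕ) (k : Fin d) : EuclideanSpace ℂ (Fin d) :=
  ((Real.sqrt ((d : ℝ) - 1) : ℂ))⁻¹ • ∑ j ∈ {k}ᶜ, stdVec d j

lemma inner_self_psiMiss (d : ℕ) (k : Fin d) : ⟪stdVec d k, psiMiss d k⟫ = 0 := by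
  rw [stdVec, EuclideanSpace.inner_single_left]
  simp only [map_one, one_mul, psiMiss]
  have : (∑ j ∈ {k}ᶜ, stdVec d j) k = 0 := by
    rw [WithLp.ofLp_sum, Finset.sum_apply]
    apply Finset.sum_eq_zero
    intro j hj
    simp only [Finset.mem_compl, Finset.mem_singleton] at hj
    simp [stdVec, EuclideanSpace.single_apply, Ne.symm hj]
  simp [this]

/-- an ontological model over a finite set `Λ` that reproduces the
Born-rule statistics of the basis measurement on the states `ψ_k` must have zero
overlap `Σ_λ min_k p_k(λ) = 0`; in particular no ontic state is common to all the
preparations. -/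
theorem no_common_ontic_state {d : ℕ} (hd : 2 ≤ d)
    {Λ : Type*} [Fintype Λ] (p ξ : Fin d → Λ → ℝ)
    (hp0 : ∀ k l, 0 ≤ p k l) (hp1 : ∀ k, ∑ l, p k l = 1)
    (hξ0 : ∀ j l, 0 ≤ ξ j l) (hξ1 : ∀ l, ∑ j, ξ j l = 1)
    (hborn : ∀ j k, ∑ l, ξ j l * p k l = ‖⟪stdVec d j, psiMiss d k⟫‖ ^ 2) :
    (∑ l, (Finset.univ.inf'
        (Finset.univ_nonempty_iff.mpr (Fin.pos_iff_nonempty.mp (by omega)))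
        fun k => p k l) = 0) ∧
    ¬ ∃ l : Λ, ∀ k, 0 < p k l := by
  -- each term ξ k l * p k l = 0
  have hzero : ∀ k l, ξ k l * p k l = 0 := by
    intro k l
    have hsum : ∑ l, ξ k l * p k l = 0 := by
      rw [hborn k k, inner_self_psiMiss]; simp
    have := (Finset.sum_eq_zero_iff_of_nonneg
      (fun l _ => mul_nonneg (hξ0 k l) (hp0 k l))).mp hsum
    exact this l (Finset.mem_univ l)
  -- for each l there is k with p k l = 0
  have hex : ∀ l, ∃ k, p k l = 0 := by
    intro l
    by_contra h
    push_neg at h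
    have hpos : ∀ j, ξ j l = 0 := by
      intro j
      rcases mul_eq_zero.mp (hzero j l) with h1 | h1
      · exact h1
      · exact absurd h1 (h j)
    have := hξ1 l
    rw [Finset.sum_eq_zero (fun j _ => hpos j)] at this
    norm_num at this
  have hinf : ∀ l, (Finset.univ.inf'
      (Finset.univ_nonempty_iff.mpr (Fin.pos_iff_nonempty.mp (by omega : 0 < d)))
      fun k => p k l) = 0 := by
    intro l
    obtain ⟨k, hk⟩ := hex l
    apply le_antisymm
    · exact hk ▸ Finset.inf'_le _ (Finset.mem_univ k)
    · exact Finset.le_inf' _ _ (fun k _ => hp0 k l)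
  refine ⟨Finset.sum_eq_zero (fun l _ => hinf l), ?_⟩
  rintro ⟨l, hl⟩
  obtain ⟨k, hk⟩ := hex l
  exact (hl k).ne' hk
end

section
/- Let Λ be a finite set and d ≥ 1. For each k ∈ {1,…,d} let p_k : Λ → ℝ be nonnegative with Σ_{λ∈Λ} p_k(λ) = 1, let c : Λ → ℝ satisfy 0 ≤ c(λ) ≤ 1, and let ξ_k : Λ → ℝ be nonnegative with Σ_{k=1}^d ξ_k(λ) = c(λ) for every λ. Suppose C_k := Σ_{λ∈Λ} c(λ)·p_k(λ) > 0 for every k. Then Σ_{k=1}^d (Σ_{λ∈Λ} ξ_k(λ)·p_k(λ)) / C_k ≥ Σ_{λ∈Λ} min_k ( c(λ)·p_k(λ) / C_k ). -/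
/-- version of the overlap bound with no-click events. With click
probabilities `c(λ)`, bin-response functions `ξ_k` summing pointwise to `c`, and
total click probabilities `C_k = Σ_λ c(λ) p_k(λ) > 0`, the post-selected success
probability `Σ_k (Σ_λ ξ_k(λ) p_k(λ))/C_k` is at least the post-selected overlap
`Σ_λ min_k (c(λ) p_k(λ)/C_k)`. -/
theorem postselected_response_ge_overlap {Λ : Type*} [Fintype Λ] {d : ℕ} (hd : 1 ≤ d)
    (p ξ : Fin d → Λ → ℝ) (c : Λ → ℝ)
    (hp0 : ∀ k l, 0 ≤ p k l) (hp1 : ∀ k, ∑ l, p k l = 1)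
    (hc0 : ∀ l, 0 ≤ c l) (hc1 : ∀ l, c l ≤ 1)
    (hξ0 : ∀ k l, 0 ≤ ξ k l) (hξc : ∀ l, ∑ k, ξ k l = c l)
    (hC : ∀ k, 0 < ∑ l, c l * p k l) :
    ∑ l, (Finset.univ.inf' (Finset.univ_nonempty_iff.mpr (Fin.pos_iff_nonempty.mp hd))
        fun k => c l * p k l / (∑ l', c l' * p k l'))
      ≤ ∑ k, (∑ l, ξ k l * p k l) / (∑ l, c l * p k l) := by
  have hne : (Finset.univ : Finset (Fin d)).Nonempty :=
    Finset.univ_nonempty_iff.mpr (Fin.pos_iff_nonempty.mp hd)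
  have hrw : ∀ k : Fin d, (∑ l, ξ k l * p k l) / (∑ l, c l * p k l)
      = ∑ l, ξ k l * (p k l / (∑ l', c l' * p k l')) := by
    intro k; rw [Finset.sum_div]; congr 1; ext l; rw [mul_div_assoc]
  simp_rw [hrw]
  rw [Finset.sum_comm]
  apply Finset.sum_le_sum
  intro l _
  set m := (Finset.univ.inf' hne fun k => c l * p k l / (∑ l', c l' * p k l')) with hm
  by_cases hcl : c l = 0
  · have hξ : ∀ k : Fin d, ξ k l = 0 := by
      intro k
      have h := hξc l
      rw [hcl] at h
      exact (Finset.sum_eq_zero_iff_of_nonneg (fun k _ => hξ0 k l)).mp h k (Finset.mem_univ k)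
    have hm0 : m = 0 := by
      rw [hm]
      apply le_antisymm
      · obtain ⟨k0⟩ := Fin.pos_iff_nonempty.mp hd
        refine le_trans (Finset.inf'_le _ (Finset.mem_univ k0)) ?_
        rw [hcl]; simp
      · apply Finset.le_inf'
        intro k _
        exact div_nonneg (mul_nonneg (hc0 l) (hp0 k l)) (hC k).le
    rw [hm0]
    apply Finset.sum_nonneg
    intro k _
    have h1 := hξ0 k l; have h2 := hp0 k l; have h3 := hC k
    positivity
  · have hclpos : 0 < c l := lt_of_le_of_ne (hc0 l) (Ne.symm hcl)
    have hkey : ∀ k : Fin d, m / c l ≤ p k l / (∑ l', c l' * p k l') := by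
      intro k
      have h1 : m ≤ c l * p k l / (∑ l', c l' * p k l') :=
        Finset.inf'_le _ (Finset.mem_univ k)
      rw [div_le_div_iff₀ hclpos (hC k)]
      calc m * (∑ l', c l' * p k l')
          ≤ (c l * p k l / (∑ l', c l' * p k l')) * (∑ l', c l' * p k l') :=
            mul_le_mul_of_nonneg_right h1 (le_of_lt (hC k))
        _ = c l * p k l := div_mul_cancel₀ _ (ne_of_gt (hC k))
        _ = p k l * c l := mul_comm _ _
    calc m = c l * (m / c l) := by field_simp
      _ = (∑ k, ξ k l) * (m / c l) := by rw [hξc l]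
      _ = ∑ k, ξ k l * (m / c l) := by rw [Finset.sum_mul]
      _ ≤ ∑ k, ξ k l * (p k l / (∑ l', c l' * p k l')) := by
          apply Finset.sum_le_sum
          intro k _
          exact mul_le_mul_of_nonneg_left (hkey k) (hξ0 k l)
end

section
/- Let Λ be a finite set and d ≥ 1. For each k ∈ {1,…,d} let p_k : Λ → ℝ be nonnegative with Σ_{λ∈Λ} p_k(λ) = 1, let c : Λ → ℝ satisfy 0 ≤ c(λ) ≤ 1, and let ξ_k : Λ → ℝ be nonnegative with Σ_{k=1}^d ξ_k(λ) = c(λ) for every λ. Suppose C_k := Σ_{λ∈Λ} c(λ)·p_k(λ) > 0 for every k, and suppose the model predicts no clicks in the empty bin, i.e. Σ_{λ∈Λ} ξ_k(λ)·p_k(λ) = 0 for every k. Then Σ_{λ∈Λ} min_k ( c(λ)·p_k(λ) / C_k ) = 0; in particular, there is no ontic state λ ∈ Λ with c(λ) > 0 and p_k(λ) > 0 for all k. -/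
/-- no-go theorem with inefficient detectors. If the model predicts no
clicks in the empty bin (`Σ_λ ξ_k(λ) p_k(λ) = 0` for all `k`) while every preparation
has positive click probability `C_k = Σ_λ c(λ) p_k(λ) > 0`, then the post-selected
overlap `Σ_λ min_k (c(λ) p_k(λ)/C_k)` vanishes; in particular no ontic state with
positive click probability is common to all preparations. -/
theorem no_common_clicking_ontic_state {Λ : Type*} [Fintype Λ] {d : ℕ} (hd : 1 ≤ d)
    (p ξ : Fin d → Λ → ℝ) (c : Λ → ℝ)
    (hp0 : ∀ k l, 0 ≤ p k l) (hp1 : ∀ k, ∑ l, p k l = 1)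
    (hc0 : ∀ l, 0 ≤ c l) (hc1 : ∀ l, c l ≤ 1)
    (hξ0 : ∀ k l, 0 ≤ ξ k l) (hξc : ∀ l, ∑ k, ξ k l = c l)
    (hC : ∀ k, 0 < ∑ l, c l * p k l)
    (hzero : ∀ k, ∑ l, ξ k l * p k l = 0) :
    (∑ l, (Finset.univ.inf' (Finset.univ_nonempty_iff.mpr (Fin.pos_iff_nonempty.mp hd))
        fun k => c l * p k l / (∑ l', c l' * p k l')) = 0) ∧
    ¬ ∃ l : Λ, 0 < c l ∧ ∀ k, 0 < p k l := by
  -- each term ξ k l * p k l vanishes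
  have hterm : ∀ k l, ξ k l * p k l = 0 := by
    intro k l
    have := (Finset.sum_eq_zero_iff_of_nonneg
      (fun l _ => mul_nonneg (hξ0 k l) (hp0 k l))).mp (hzero k) l (Finset.mem_univ l)
    exact this
  have hno : ¬ ∃ l : Λ, 0 < c l ∧ ∀ k, 0 < p k l := by
    rintro ⟨l, hcl, hpl⟩
    have hξz : ∀ k, ξ k l = 0 := by
      intro k
      rcases mul_eq_zero.mp (hterm k l) with h | h
      · exact h
      · exact absurd h (ne_of_gt (hpl k))
    have : c l = 0 := by rw [← hξc l]; simp [hξz]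
    exact absurd this (ne_of_gt hcl)
  refine ⟨?_, hno⟩
  apply Finset.sum_eq_zero
  intro l _
  have hne : (Finset.univ : Finset (Fin d)).Nonempty :=
    Finset.univ_nonempty_iff.mpr (Fin.pos_iff_nonempty.mp hd)
  -- each term of the inf' is nonneg
  have h0 : 0 ≤ Finset.univ.inf' hne fun k => c l * p k l / (∑ l', c l' * p k l') :=
    Finset.le_inf' hne _ (fun k _ =>
      div_nonneg (mul_nonneg (hc0 l) (hp0 k l)) (le_of_lt (hC k)))
  -- there is k with c l * p k l = 0
  have hex : ∃ k, c l * p k l = 0 := by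
    by_contra h
    push_neg at h
    have hpos : ∀ k, 0 < c l * p k l := fun k =>
      lt_of_le_of_ne (mul_nonneg (hc0 l) (hp0 k l)) (Ne.symm (h k))
    have k0 : Fin d := ⟨0, hd⟩
    have hcl : 0 < c l := by
      by_contra hc
      push_neg at hc
      have : c l = 0 := le_antisymm hc (hc0 l)
      simpa [this] using hpos k0
    exact hno ⟨l, hcl, fun k => by
      by_contra hp
      push_neg at hp
      have : p k l = 0 := le_antisymm hp (hp0 k l)
      simpa [this] using hpos k⟩
  rcases hex with ⟨k, hk⟩
  have hle : (Finset.univ.inf' hne fun k => c l * p k l / (∑ l', c l' * p k l')) ≤ 0 := by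
    calc _ ≤ c l * p k l / (∑ l', c l' * p k l') := Finset.inf'_le _ (Finset.mem_univ k)
    _ = 0 := by rw [hk, zero_div]
  exact le_antisymm hle h0
end

section
/- Let H be a complex Hilbert space, let a > 0 and 0 < s ≤ 1 be real, and let u, v, w be unit vectors in H with ⟨w,u⟩ = ⟨w,v⟩ = exp(−a/2) and ⟨u,v⟩ = exp(−a + a·s). Let ũ = (u − ⟨w,u⟩w)/‖u − ⟨w,u⟩w‖ and ṽ = (v − ⟨w,v⟩w)/‖v − ⟨w,v⟩w‖ be the normalized projections of u and v onto the orthogonal complement of w. Then ⟨ũ, ṽ⟩ = (exp(a·s) − 1)/(exp(a) − 1). -/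
open scoped ComplexInnerProductSpace

/-- overlap after projecting out the vacuum. For unit vectors
`u, v, w` in a complex Hilbert space with `⟨w,u⟩ = ⟨w,v⟩ = e^{−a/2}` and
`⟨u,v⟩ = e^{−a+as}`, the normalized projections of `u` and `v` onto the orthogonal
complement of `w` satisfy `⟨ũ, ṽ⟩ = (e^{as} − 1)/(e^{a} − 1)`. -/
theorem inner_projections_orthogonal_vacuum
    {H : Type*} [NormedAddCommGroup H] [InnerProductSpace ℂ H] [CompleteSpace H]
    {a s : ℝ} (ha : 0 < a) (hs0 : 0 < s) (hs1 : s ≤ 1)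
    (u v w : H) (hu : ‖u‖ = 1) (hv : ‖v‖ = 1) (hw : ‖w‖ = 1)
    (hwu : ⟪w, u⟫ = ((Real.exp (-a / 2) : ℝ) : ℂ))
    (hwv : ⟪w, v⟫ = ((Real.exp (-a / 2) : ℝ) : ℂ))
    (huv : ⟪u, v⟫ = ((Real.exp (-a + a * s) : ℝ) : ℂ)) :
    ⟪(‖u - ⟪w, u⟫ • w‖ : ℂ)⁻¹ • (u - ⟪w, u⟫ • w),
      (‖v - ⟪w, v⟫ • w‖ : ℂ)⁻¹ • (v - ⟪w, v⟫ • w)⟫ =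
      (((Real.exp (a * s) - 1) / (Real.exp a - 1) : ℝ) : ℂ) := by
  set c : ℝ := Real.exp (-a / 2) with hc
  have hcc : c * c = Real.exp (-a) := by
    rw [← Real.exp_add]; ring_nf
  have huw : ⟪u, w⟫ = (c : ℂ) := by
    rw [← inner_conj_symm, hwu]; simp
  have hvw : ⟪v, w⟫ = (c : ℂ) := by
    rw [← inner_conj_symm, hwv]; simp
  have huu : ⟪u, u⟫ = (1 : ℂ) := by
    rw [inner_self_eq_norm_sq_to_K, hu]; norm_num
  have hvv : ⟪v, v⟫ = (1 : ℂ) := by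
    rw [inner_self_eq_norm_sq_to_K, hv]; norm_num
  have hww : ⟪w, w⟫ = (1 : ℂ) := by
    rw [inner_self_eq_norm_sq_to_K, hw]; norm_num
  have hxu : ⟪u - ⟪w, u⟫ • w, u - ⟪w, u⟫ • w⟫ = ((1 - Real.exp (-a) : ℝ) : ℂ) := by
    simp only [inner_sub_left, inner_sub_right, inner_smul_left, inner_smul_right,
      hwu, huw, hww, huu]
    simp only [Complex.conj_ofReal]
    rw [← hcc]; push_cast; ring
  have hxv : ⟪v - ⟪w, v⟫ • w, v - ⟪w, v⟫ • w⟫ = ((1 - Real.exp (-a) : ℝ) : ℂ) := by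
    simp only [inner_sub_left, inner_sub_right, inner_smul_left, inner_smul_right,
      hwv, hvw, hww, hvv]
    simp only [Complex.conj_ofReal]
    rw [← hcc]; push_cast; ring
  have hpos : (0:ℝ) < 1 - Real.exp (-a) := by
    have := Real.exp_lt_one_iff.mpr (by linarith : -a < 0)
    linarith
  have hnu : ‖u - ⟪w, u⟫ • w‖ = Real.sqrt (1 - Real.exp (-a)) := by
    have := inner_self_eq_norm_sq_to_K (𝕜 := ℂ) (u - ⟪w, u⟫ • w)
    rw [hxu] at this
    norm_cast at this
    have h2 : ‖u - ⟪w, u⟫ • w‖ ^ 2 = 1 - Real.exp (-a) := Complex.ofReal_injective this.symm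
    rw [← h2, Real.sqrt_sq (norm_nonneg _)]
  have hnv : ‖v - ⟪w, v⟫ • w‖ = Real.sqrt (1 - Real.exp (-a)) := by
    have := inner_self_eq_norm_sq_to_K (𝕜 := ℂ) (v - ⟪w, v⟫ • w)
    rw [hxv] at this
    norm_cast at this
    have h2 : ‖v - ⟪w, v⟫ • w‖ ^ 2 = 1 - Real.exp (-a) := Complex.ofReal_injective this.symm
    rw [← h2, Real.sqrt_sq (norm_nonneg _)]
  have hcross : ⟪u - ⟪w, u⟫ • w, v - ⟪w, v⟫ • w⟫
      = ((Real.exp (-a + a * s) - Real.exp (-a) : ℝ) : ℂ) := by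
    simp only [inner_sub_left, inner_sub_right, inner_smul_left, inner_smul_right,
      hwu, hwv, huw, hvw, hww, huv]
    simp only [Complex.conj_ofReal]
    rw [← hcc]; push_cast; ring
  rw [inner_smul_left, inner_smul_right, hcross, hnu, hnv]
  have hsq : ((Real.sqrt (1 - Real.exp (-a)) : ℂ))⁻¹ ≠ 0 := by
    simp [Real.sqrt_eq_zero', hpos.le, not_le, hpos, Complex.ofReal_ne_zero,
      ne_of_gt (Real.sqrt_pos.mpr hpos)]
  rw [map_inv₀, Complex.conj_ofReal]
  have key : ((Real.sqrt (1 - Real.exp (-a)) : ℝ) : ℂ)⁻¹ *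
      (((Real.sqrt (1 - Real.exp (-a)) : ℝ) : ℂ)⁻¹ *
        ((Real.exp (-a + a * s) - Real.exp (-a) : ℝ) : ℂ)) =
      (((Real.exp (-a + a * s) - Real.exp (-a)) / (1 - Real.exp (-a)) : ℝ) : ℂ) := by
    push_cast
    rw [← mul_assoc, ← mul_inv]
    rw [← Complex.ofReal_mul, Real.mul_self_sqrt hpos.le]
    field_simp
    push_cast
    ring
  rw [key]
  congr 1
  have hea : 1 < Real.exp a := by
    have := Real.add_one_le_exp a
    nlinarith [Real.exp_pos a, Real.exp_pos (-a), Real.exp_neg a,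
      mul_pos (Real.exp_pos a) hpos]
  rw [div_eq_div_iff (by linarith) (by linarith)]
  have hmul : Real.exp (-a + a * s) * Real.exp a = Real.exp (a * s) := by
    rw [← Real.exp_add]; ring_nf
  have hmul2 : Real.exp (-a) * Real.exp a = 1 := by
    rw [← Real.exp_add]; simp
  have hmul3 : Real.exp (a * s) * Real.exp (-a) = Real.exp (-a + a * s) := by
    rw [← Real.exp_add]; ring_nf
  nlinarith [hmul, hmul2, hmul3]
end
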